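/- Let 𝓘 be an operator ideal and P : E → F a continuous n-homogeneous polynomial. Then P is 𝓘-bounded (P(B_E) ⊆ u(B_H) for some Banach space H and u ∈ 𝓘(H;F)) if and only if its associated symmetric n-linear map P̌ is 𝓘-bounded (P̌(B_E × ⋯ × B_E) ⊆ v(B_H) for some v ∈ 𝓘(H;F)). Moreover, if P(B_E) ⊆ u(B_H), then P̌(B_E×⋯×B_E) ⊆ (n^n/n!)·u(B_H). -/

import Mathlib

open Metric

universe u

structure BanachSp (𝕜 : Type u) [NontriviallyNormedField 𝕜] : Type (u + 1) where
  carrier : Type u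
  [grp : NormedAddCommGroup carrier]
  [mod : NormedSpace 𝕜 carrier]
  [comp : CompleteSpace carrier]

attribute [instance] BanachSp.grp BanachSp.mod BanachSp.comp

open Finset

variable {𝕜 : Type*} [RCLike 𝕜] {E F : Type*} [NormedAddCommGroup E] [NormedSpace 𝕜 E]
  [NormedAddCommGroup F] [NormedSpace 𝕜 F] {n : ℕ}

private def sg (b : Bool) : 𝕜 := if b then 1 else -1

private lemma sg_norm (b : Bool) : ‖(sg b : 𝕜)‖ = 1 := by
  cases b <;> simp [sg]

private lemma sg_sq_sum (m : ℕ) :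
    (∑ b : Bool, (sg b : 𝕜) ^ (m + 1)) = if Odd m then 2 else 0 := by
  rcases Nat.even_or_odd m with hm | hm
  · simp [sg, Fintype.sum_bool, pow_succ, hm.neg_one_pow, Nat.not_odd_iff_even.mpr hm]
  · simp [sg, Fintype.sum_bool, pow_succ, hm.neg_one_pow, hm]

private lemma coef (r : Fin n → Fin n) :
    (∑ ε : Fin n → Bool, (∏ j, (sg (ε j) : 𝕜)) * ∏ i, (sg (ε (r i)) : 𝕜))
      = if Function.Bijective r then (2 : 𝕜) ^ n else 0 := by
  classical
  set m : Fin n → ℕ := fun j => #(univ.filter fun i => r i = j) with hm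
  have h1 : ∀ ε : Fin n → Bool,
      (∏ i, (sg (ε (r i)) : 𝕜)) = ∏ j, (sg (ε j) : 𝕜) ^ m j := by
    intro ε
    rw [← Finset.prod_fiberwise univ r (fun i => (sg (ε (r i)) : 𝕜))]
    refine Finset.prod_congr rfl fun j _ => ?_
    rw [Finset.prod_congr rfl (fun i hi => ?_), Finset.prod_const]
    rw [(Finset.mem_filter.1 hi).2]
  have h2 : ∀ ε : Fin n → Bool,
      (∏ j, (sg (ε j) : 𝕜)) * ∏ j, (sg (ε j) : 𝕜) ^ m j
        = ∏ j, (sg (ε j) : 𝕜) ^ (m j + 1) := by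
    intro ε
    rw [← Finset.prod_mul_distrib]
    exact Finset.prod_congr rfl fun j _ => by rw [pow_succ, mul_comm]
  calc (∑ ε : Fin n → Bool, (∏ j, (sg (ε j) : 𝕜)) * ∏ i, (sg (ε (r i)) : 𝕜))
      = ∑ ε : Fin n → Bool, ∏ j, (sg (ε j) : 𝕜) ^ (m j + 1) := by
        refine Finset.sum_congr rfl fun ε _ => ?_; rw [h1, h2]
    _ = ∏ j, ∑ b : Bool, (sg b : 𝕜) ^ (m j + 1) := by
        rw [Finset.prod_univ_sum]
        rw [← Fintype.piFinset_univ]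
    _ = ∏ j, (if Odd (m j) then (2:𝕜) else 0) := by
        exact Finset.prod_congr rfl fun j _ => sg_sq_sum (m j)
    _ = if Function.Bijective r then (2 : 𝕜) ^ n else 0 := by
        by_cases hr : Function.Bijective r
        · have : ∀ j, m j = 1 := by
            intro j
            have : (univ.filter fun i => r i = j) = {(Equiv.ofBijective r hr).symm j} := by
              ext i
              simp only [Finset.mem_filter, Finset.mem_univ, true_and, Finset.mem_singleton,
                Equiv.eq_symm_apply]
              exact Iff.rfl
            simp [hm, this]
          rw [if_pos hr]
          simp [this]
        · have : ∃ j, ∀ i, r i ≠ j := by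
            by_contra h
            push_neg at h
            exact hr ((Finite.surjective_iff_bijective).1 fun j => h j)
          obtain ⟨j, hj⟩ := this
          have hmj : m j = 0 := by
            simp [hm, Finset.filter_eq_empty_iff.2 fun i _ => hj i]
          rw [if_neg hr]
          refine Finset.prod_eq_zero (Finset.mem_univ j) ?_
          simp [hmj]

private lemma polar (B : ContinuousMultilinearMap 𝕜 (fun _ : Fin n => E) F)
    (hBsym : ∀ (σ : Equiv.Perm (Fin n)) (v : Fin n → E), B (fun i => v (σ i)) = B v)
    (x : Fin n → E) :
    (∑ ε : Fin n → Bool, (∏ j, (sg (ε j) : 𝕜)) • B (fun _ => ∑ j, (sg (ε j) : 𝕜) • x j))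
      = ((2 : 𝕜) ^ n * n.factorial) • B x := by
  classical
  have expand : ∀ ε : Fin n → Bool,
      B (fun _ => ∑ j, (sg (ε j) : 𝕜) • x j)
        = ∑ r : Fin n → Fin n, (∏ i, (sg (ε (r i)) : 𝕜)) • B (fun i => x (r i)) := by
    intro ε
    have h := B.map_sum (α := fun _ : Fin n => Fin n) (g := fun _ j => (sg (ε j) : 𝕜) • x j)
    rw [h]
    exact Finset.sum_congr rfl fun r _ => B.map_smul_univ _ _
  calc (∑ ε : Fin n → Bool, (∏ j, (sg (ε j) : 𝕜)) • B (fun _ => ∑ j, (sg (ε j) : 𝕜) • x j))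
      = ∑ ε : Fin n → Bool, ∑ r : Fin n → Fin n,
          ((∏ j, (sg (ε j) : 𝕜)) * ∏ i, (sg (ε (r i)) : 𝕜)) • B (fun i => x (r i)) := by
        refine Finset.sum_congr rfl fun ε _ => ?_
        rw [expand ε, Finset.smul_sum]
        exact Finset.sum_congr rfl fun r _ => (smul_smul _ _ _)
    _ = ∑ r : Fin n → Fin n,
          (∑ ε : Fin n → Bool, (∏ j, (sg (ε j) : 𝕜)) * ∏ i, (sg (ε (r i)) : 𝕜)) • B (fun i => x (r i)) := by
        rw [Finset.sum_comm]
        exact Finset.sum_congr rfl fun r _ => (Finset.sum_smul).symm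
    _ = ∑ r : Fin n → Fin n,
          (if Function.Bijective r then (2 : 𝕜) ^ n else 0) • B (fun i => x (r i)) := by
        exact Finset.sum_congr rfl fun r _ => by rw [coef]
    _ = ∑ r ∈ univ.filter (fun r : Fin n → Fin n => Function.Bijective r),
          ((2 : 𝕜) ^ n) • B (fun i => x (r i)) := by
        rw [Finset.sum_filter]
        exact Finset.sum_congr rfl fun r _ => by split_ifs <;> simp
    _ = ∑ r ∈ univ.filter (fun r : Fin n → Fin n => Function.Bijective r),
          ((2 : 𝕜) ^ n) • B x := by
        refine Finset.sum_congr rfl fun r hr => ?_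
        have hr' := (Finset.mem_filter.1 hr).2
        rw [show (fun i => x (r i)) = fun i => x ((Equiv.ofBijective r hr') i) from rfl,
          hBsym]
    _ = ((2 : 𝕜) ^ n * n.factorial) • B x := by
        rw [Finset.sum_const]
        have hcard : #(univ.filter (fun r : Fin n → Fin n => Function.Bijective r))
            = n.factorial := by
          rw [← Fintype.card_subtype]
          rw [Fintype.card_congr (⟨fun f => Equiv.ofBijective f.1 f.2,
            fun σ => ⟨σ, σ.bijective⟩, fun f => rfl, fun σ => Equiv.ext fun i => rfl⟩ :
            {f : Fin n → Fin n // Function.Bijective f} ≃ Equiv.Perm (Fin n))]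
          rw [Fintype.card_perm, Fintype.card_fin]
        rw [hcard, ← Nat.cast_smul_eq_nsmul 𝕜, smul_smul, mul_comm]

/-- a continuous `n`-homogeneous polynomial `P` (with associated symmetric
`n`-linear map `P̌ = B`, so `P x = B(x,…,x)`) is `𝓘`-bounded iff `P̌` is `𝓘`-bounded.
Moreover, if `P(B_E) ⊆ u(B_H)` then `P̌(B_E × ⋯ × B_E) ⊆ (nⁿ/n!)·u(B_H)`. -/
theorem stmt15 (𝕜 : Type u) [RCLike 𝕜]
    (I : ∀ G F : BanachSp 𝕜, Set (G.carrier →L[𝕜] F.carrier))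
    (hIsmul : ∀ (G F : BanachSp 𝕜) (c : 𝕜) (u : G.carrier →L[𝕜] F.carrier),
      u ∈ I G F → c • u ∈ I G F)
    (n : ℕ) (hn : 0 < n) (E F : Type u)
    [NormedAddCommGroup E] [NormedSpace 𝕜 E] [CompleteSpace E]
    [NormedAddCommGroup F] [NormedSpace 𝕜 F] [CompleteSpace F]
    (B : ContinuousMultilinearMap 𝕜 (fun _ : Fin n => E) F)
    (hBsym : ∀ (σ : Equiv.Perm (Fin n)) (v : Fin n → E), B (fun i => v (σ i)) = B v)
    (P : E → F) (hP : ∀ x : E, P x = B (fun _ => x)) :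
    ((∃ (H : BanachSp 𝕜), ∃ u ∈ I H (BanachSp.mk F),
        ∀ x : E, ‖x‖ ≤ 1 → P x ∈ u '' closedBall 0 1) ↔
      (∃ (H : BanachSp 𝕜), ∃ v ∈ I H (BanachSp.mk F),
        ∀ x : Fin n → E, (∀ i, ‖x i‖ ≤ 1) → B x ∈ v '' closedBall 0 1)) ∧
    (∀ (H : BanachSp 𝕜) (u : H.carrier →L[𝕜] F), u ∈ I H (BanachSp.mk F) →
      (∀ x : E, ‖x‖ ≤ 1 → P x ∈ u '' closedBall 0 1) →
      ∀ x : Fin n → E, (∀ i, ‖x i‖ ≤ 1) →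
        B x ∈ (((n : 𝕜) ^ n / (n.factorial : 𝕜)) • u) '' closedBall 0 1) := by
  classical
  have hn𝕜 : ((n : 𝕜)) ≠ 0 := Nat.cast_ne_zero.2 hn.ne'
  have hfac : ((n.factorial : 𝕜)) ≠ 0 := Nat.cast_ne_zero.2 n.factorial_ne_zero
  have h2n : ((2 : 𝕜) ^ n) ≠ 0 := pow_ne_zero _ two_ne_zero
  have key2 : ∀ (H : BanachSp 𝕜) (u : H.carrier →L[𝕜] F), u ∈ I H (BanachSp.mk F) →
      (∀ x : E, ‖x‖ ≤ 1 → P x ∈ u '' closedBall 0 1) →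
      ∀ x : Fin n → E, (∀ i, ‖x i‖ ≤ 1) →
        B x ∈ (((n : 𝕜) ^ n / (n.factorial : 𝕜)) • u) '' closedBall 0 1 := by
    intro H u hu hPu x hx
    -- for each sign pattern, get a preimage point
    have hz : ∀ ε : Fin n → Bool, ∃ h : H.carrier, ‖h‖ ≤ 1 ∧
        u h = P ((n : 𝕜)⁻¹ • ∑ j, (sg (ε j) : 𝕜) • x j) := by
      intro ε
      have hy : ‖∑ j, (sg (ε j) : 𝕜) • x j‖ ≤ n := by
        calc ‖∑ j, (sg (ε j) : 𝕜) • x j‖ ≤ ∑ j : Fin n, ‖(sg (ε j) : 𝕜) • x j‖ :=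
              norm_sum_le _ _
          _ ≤ ∑ _j : Fin n, 1 := by
              refine Finset.sum_le_sum fun j _ => ?_
              rw [norm_smul, sg_norm, one_mul]; exact hx j
          _ = n := by simp
      have hz1 : ‖(n : 𝕜)⁻¹ • ∑ j, (sg (ε j) : 𝕜) • x j‖ ≤ 1 := by
        rw [norm_smul, norm_inv, RCLike.norm_natCast]
        rw [inv_mul_le_one₀ (by exact_mod_cast hn : (0:ℝ) < n)] at *
        · exact hy
      obtain ⟨h, hh1, hh2⟩ := hPu _ hz1
      exact ⟨h, mem_closedBall_zero_iff.1 hh1, hh2⟩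
    choose h hh1 hh2 using hz
    set c : (Fin n → Bool) → 𝕜 := fun ε => ∏ j, (sg (ε j) : 𝕜) with hc
    -- B applied to the scaled diagonal
    have hdiag : ∀ ε : Fin n → Bool,
        B (fun _ => ∑ j, (sg (ε j) : 𝕜) • x j) = (n : 𝕜) ^ n • u (h ε) := by
      intro ε
      have : (fun _ : Fin n => ∑ j, (sg (ε j) : 𝕜) • x j)
          = fun _ : Fin n => (n : 𝕜) • ((n : 𝕜)⁻¹ • ∑ j, (sg (ε j) : 𝕜) • x j) := by
        funext i; rw [smul_inv_smul₀ hn𝕜]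
      rw [this, B.map_smul_univ, Finset.prod_const, Finset.card_univ, Fintype.card_fin,
        hh2 ε, hP]
    have key := polar B hBsym x
    have key' : ((2:𝕜) ^ n * n.factorial) • B x = (n : 𝕜) ^ n • ∑ ε : Fin n → Bool, c ε • u (h ε) := by
      rw [← key, Finset.smul_sum]
      exact Finset.sum_congr rfl fun ε _ => by rw [hdiag, smul_comm]
    set g : H.carrier := ∑ ε : Fin n → Bool, c ε • h ε with hg
    refine ⟨((2:𝕜) ^ n)⁻¹ • g, ?_, ?_⟩
    · rw [mem_closedBall_zero_iff, norm_smul, norm_inv, norm_pow, RCLike.norm_ofNat]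
      rw [inv_mul_le_one₀ (by positivity : (0:ℝ) < 2 ^ n)]
      calc ‖g‖ ≤ ∑ ε : Fin n → Bool, ‖c ε • h ε‖ := norm_sum_le _ _
        _ ≤ ∑ _ε : Fin n → Bool, 1 := by
            refine Finset.sum_le_sum fun ε _ => ?_
            rw [norm_smul, hc]
            calc ‖∏ j, (sg (ε j) : 𝕜)‖ * ‖h ε‖ ≤ ‖∏ j, (sg (ε j) : 𝕜)‖ * 1 := by
                  exact mul_le_mul_of_nonneg_left (hh1 ε) (norm_nonneg _)
              _ = 1 := by rw [mul_one, norm_prod]; simp [sg_norm]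
        _ = 2 ^ n := by simp [Fintype.card_fun]
    · have hug : u g = ∑ ε : Fin n → Bool, c ε • u (h ε) := by
        rw [hg, map_sum]
        exact Finset.sum_congr rfl fun ε _ => u.map_smul _ _
      rw [ContinuousLinearMap.smul_apply, map_smul, hug]
      have hBx : B x = ((2:𝕜) ^ n * n.factorial)⁻¹ •
          ((n : 𝕜) ^ n • ∑ ε : Fin n → Bool, c ε • u (h ε)) := by
        rw [← key', inv_smul_smul₀ (mul_ne_zero h2n hfac)]
      rw [hBx, smul_smul, smul_smul]
      congr 1
      field_simp
  refine ⟨⟨?_, ?_⟩, key2⟩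
  · rintro ⟨H, u, hu, hPu⟩
    exact ⟨H, ((n : 𝕜) ^ n / (n.factorial : 𝕜)) • u, hIsmul _ _ _ _ hu, key2 H u hu hPu⟩
  · rintro ⟨H, v, hv, hBv⟩
    exact ⟨H, v, hv, fun x hx => by rw [hP]; exact hBv _ fun i => hx⟩
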